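/- Let G and E be topological groups and let η : E → G be a continuous open surjective group homomorphism whose kernel D is contained in the center of E (a topological central extension). Then the generalized Steinberg symbol is continuous: the map sending a commuting pair (g₁,g₂) to [g₁:g₂], defined on the subspace {(g₁,g₂) ∈ G × G : g₁g₂ = g₂g₁} of G × G with values in E, is continuous. -/

import Mathlib

open scoped commutatorElement

lemma comm_lift_left {E G : Type*} [Group E] [Group G] (η : E →* G)
    (hcent : η.ker ≤ Subgroup.center E) {x y : E} (h : η x = η y) (z : E) :
    ⁅x, z⁆ = ⁅y, z⁆ := by
  have hd : x⁻¹ * y ∈ Subgroup.center E := hcent (by simp [MonoidHom.mem_ker, h])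
  rw [Subgroup.mem_center_iff] at hd
  set d := x⁻¹ * y with hdd
  have hy : y = x * d := by rw [hdd]; group
  have h1 : d * z = z * d := (hd z).symm
  rw [hy, commutatorElement_def, commutatorElement_def, mul_inv_rev]
  symm
  calc x * d * z * (d⁻¹ * x⁻¹) * z⁻¹
      = x * (d * z * d⁻¹) * x⁻¹ * z⁻¹ := by group
    _ = x * (z * d * d⁻¹) * x⁻¹ * z⁻¹ := by rw [h1]
    _ = x * z * x⁻¹ * z⁻¹ := by group

theorem stmt6 {E G : Type*}
    [Group E] [TopologicalSpace E] [IsTopologicalGroup E]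
    [Group G] [TopologicalSpace G] [IsTopologicalGroup G]
    (η : E →* G) (hcont : Continuous η) (hopen : IsOpenMap η)
    (hsurj : Function.Surjective η) (hcent : η.ker ≤ Subgroup.center E) :
    Continuous (fun p : {p : G × G // Commute p.1 p.2} =>
      ⁅Function.surjInv hsurj p.val.1, Function.surjInv hsurj p.val.2⁆) := by
  set f : E × E → G × G := Prod.map η η with hf
  set s : Set (G × G) := {p | Commute p.1 p.2} with hs
  have hq : Topology.IsQuotientMap (s.restrictPreimage f) :=
    ((hopen.prodMap hopen).restrictPreimage s).isQuotientMap
      (hcont.prodMap hcont).restrictPreimage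
      ((hsurj.prodMap hsurj).restrictPreimage _)
  rw [hq.continuous_iff]
  have : ((fun p : {p : G × G // Commute p.1 p.2} =>
      ⁅Function.surjInv hsurj p.val.1, Function.surjInv hsurj p.val.2⁆)
        ∘ (s.restrictPreimage f))
      = fun q : ↥(f ⁻¹' s) => ⁅q.val.1, q.val.2⁆ := by
    funext q
    show ⁅Function.surjInv hsurj (η q.val.1), Function.surjInv hsurj (η q.val.2)⁆
        = ⁅q.val.1, q.val.2⁆
    rw [comm_lift_left η hcent (Function.surjInv_eq hsurj (η q.val.1)) _]
    rw [show ⁅q.val.1, Function.surjInv hsurj (η q.val.2)⁆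
        = ⁅Function.surjInv hsurj (η q.val.2), q.val.1⁆⁻¹ by group]
    rw [comm_lift_left η hcent (Function.surjInv_eq hsurj (η q.val.2)) _]
    group
  rw [this]
  simp only [commutatorElement_def]
  fun_prop
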